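/- Let A = [[√2−1, 0],[0, √2+1]] and B = [[1,1],[0,1]] in SL(2, ℝ). Then (A⁻ⁿ B Aⁿ)(Aⁿ B A⁻ⁿ) = B^m where m = λ^{2n} + λ^{−2n} with λ = √2+1, and m is a positive integer growing exponentially in n; hence B is a distortion element of the subgroup generated by A and B. -/

import Mathlib

/-- The word length of `g` with respect to a generating set `S`. -/
noncomputable def wordLength {G : Type*} [Group G] (S : Set G) (g : G) : ℕ :=
  sInf {n : ℕ | ∃ w : Fin n → G, (∀ i, w i ∈ S ∨ (w i)⁻¹ ∈ S) ∧ (List.ofFn w).prod = g}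

/-- `f` is a distortion element with respect to the generating set `S`. -/
def IsDistortionElement {G : Type*} [Group G] (S : Set G) (f : G) : Prop :=
  ¬ IsOfFinOrder f ∧
    Filter.liminf (fun n : ℕ => (wordLength S (f ^ n) : ℝ) / n) Filter.atTop = 0

/-- `g` can be written as a word of length `n` in `S ∪ S⁻¹`. -/
def HasWord {G : Type*} [Group G] (S : Set G) (g : G) (n : ℕ) : Prop :=
  ∃ w : Fin n → G, (∀ i, w i ∈ S ∨ (w i)⁻¹ ∈ S) ∧ (List.ofFn w).prod = g

lemma wordLength_le_of_hasWord {G : Type*} [Group G] {S : Set G} {g : G} {n : ℕ}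
    (h : HasWord S g n) : wordLength S g ≤ n :=
  Nat.sInf_le h

lemma hasWord_iff_list {G : Type*} [Group G] {S : Set G} {g : G} {n : ℕ} :
    HasWord S g n ↔ ∃ l : List G, l.length = n ∧ (∀ x ∈ l, x ∈ S ∨ x⁻¹ ∈ S) ∧ l.prod = g := by
  constructor
  · rintro ⟨w, hw, hp⟩
    refine ⟨List.ofFn w, by simp, ?_, hp⟩
    intro x hx
    obtain ⟨i, rfl⟩ := List.mem_ofFn.mp hx
    exact hw i
  · rintro ⟨l, rfl, hw, hp⟩
    refine ⟨l.get, ?_, by simpa using hp⟩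
    intro i
    exact hw _ (by simpa using List.get_mem l i i.isLt)

lemma HasWord.mul {G : Type*} [Group G] {S : Set G} {g h : G} {a b : ℕ}
    (hg : HasWord S g a) (hh : HasWord S h b) : HasWord S (g * h) (a + b) := by
  rw [hasWord_iff_list] at *
  obtain ⟨l1, hl1, hw1, hp1⟩ := hg
  obtain ⟨l2, hl2, hw2, hp2⟩ := hh
  refine ⟨l1 ++ l2, by simp [hl1, hl2], ?_, by simp [hp1, hp2]⟩
  intro x hx
  rcases List.mem_append.mp hx with h | h
  · exact hw1 x h
  · exact hw2 x h

lemma hasWord_gen {G : Type*} [Group G] {S : Set G} {g : G}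
    (h : g ∈ S ∨ g⁻¹ ∈ S) : HasWord S g 1 :=
  ⟨![g], fun i => by fin_cases i <;> simpa using h, by simp⟩

lemma hasWord_pow {G : Type*} [Group G] {S : Set G} {g : G}
    (h : g ∈ S ∨ g⁻¹ ∈ S) (n : ℕ) : HasWord S (g ^ n) n := by
  induction n with
  | zero => exact ⟨![], fun i => i.elim0, by simp⟩
  | succ n ih =>
      have := ih.mul (hasWord_gen h)
      rw [pow_succ]
      exact this

/-- The integer sequence `λ^{2n} + λ^{-2n}`. -/
def mseq : ℕ → ℤ
  | 0 => 2
  | 1 => 6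
  | n + 2 => 6 * mseq (n + 1) - mseq n

lemma diag_pow (a d : ℝ) (n : ℕ) :
    (!![a,0;0,d] : Matrix (Fin 2) (Fin 2) ℝ) ^ n = !![a^n,0;0,d^n] := by
  induction n with
  | zero => simp [Matrix.one_fin_two]
  | succ n ih => rw [pow_succ, ih, Matrix.mul_fin_two]; ring_nf

lemma unipotent_pow (n : ℕ) :
    (!![1,1;0,1] : Matrix (Fin 2) (Fin 2) ℝ) ^ n = !![1,(n:ℝ);0,1] := by
  induction n with
  | zero => simp [Matrix.one_fin_two]
  | succ n ih => rw [pow_succ, ih, Matrix.mul_fin_two]; push_cast; ring_nf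

lemma mseq_real {lam : ℝ} (hl : lam ≠ 0) (h6 : lam ^ 2 + lam⁻¹ ^ 2 = 6) :
    ∀ n : ℕ, (mseq n : ℝ) = lam ^ (2 * n) + lam⁻¹ ^ (2 * n) := by
  have hm : lam * lam⁻¹ = 1 := mul_inv_cancel₀ hl
  have key : ∀ n : ℕ, (mseq n : ℝ) = lam ^ (2 * n) + lam⁻¹ ^ (2 * n) ∧
      (mseq (n+1) : ℝ) = lam ^ (2 * (n+1)) + lam⁻¹ ^ (2 * (n+1)) := by
    intro n
    induction n with
    | zero =>
        constructor
        · norm_num [mseq]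
        · show ((6 : ℤ) : ℝ) = _
          push_cast
          simpa [inv_pow] using h6.symm
    | succ n ih =>
        obtain ⟨h1, h2⟩ := ih
        refine ⟨h2, ?_⟩
        show ((6 * mseq (n+1) - mseq n : ℤ) : ℝ) = _
        push_cast
        rw [h1, h2]
        rw [show 2 * (n + 2) = 2*n + 4 by ring, show 2 * (n + 1) = 2*n + 2 by ring,
          pow_add, pow_add, pow_add, pow_add]
        linear_combination (-(lam ^ (2*n) * lam^2) - lam⁻¹ ^ (2*n) * lam⁻¹^2) * h6 +
          ((lam ^ (2*n) + lam⁻¹ ^ (2*n)) * (lam * lam⁻¹ + 1)) * hm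
  exact fun n => (key n).1

theorem unipotent_distorted_in_SL2
    (A B : Matrix.SpecialLinearGroup (Fin 2) ℝ)
    (hA : (A : Matrix (Fin 2) (Fin 2) ℝ) = !![Real.sqrt 2 - 1, 0; 0, Real.sqrt 2 + 1])
    (hB : (B : Matrix (Fin 2) (Fin 2) ℝ) = !![1, 1; 0, 1])
    (lam : ℝ) (hlam : lam = Real.sqrt 2 + 1) :
    (∀ n : ℕ, ∃ m : ℤ, 0 < m ∧ (m : ℝ) = lam ^ (2 * n) + lam⁻¹ ^ (2 * n) ∧
      (A⁻¹ ^ n * B * A ^ n) * (A ^ n * B * A⁻¹ ^ n) = B ^ m) ∧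
    IsDistortionElement ({A, B} : Set (Matrix.SpecialLinearGroup (Fin 2) ℝ)) B := by
  have h2 : Real.sqrt 2 ^ 2 = 2 := Real.sq_sqrt (by norm_num)
  have hs2 : (1:ℝ) ≤ Real.sqrt 2 := by nlinarith [Real.sqrt_nonneg 2]
  have hlpos : 0 < lam := by rw [hlam]; linarith
  have hl0 : lam ≠ 0 := ne_of_gt hlpos
  have hlinv : lam⁻¹ = Real.sqrt 2 - 1 := by
    have : lam * (Real.sqrt 2 - 1) = 1 := by rw [hlam]; linear_combination h2
    exact inv_eq_of_mul_eq_one_right this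
  have h6 : lam ^ 2 + lam⁻¹ ^ 2 = 6 := by
    rw [hlinv, hlam]; linear_combination 2 * h2
  have hmr := mseq_real hl0 h6
  have hpos : ∀ n : ℕ, 0 < mseq n := by
    intro n
    have : (0:ℝ) < (mseq n : ℝ) := by rw [hmr n]; positivity
    exact_mod_cast this
  -- coercion computations
  have hAinv : ((A⁻¹ : Matrix.SpecialLinearGroup (Fin 2) ℝ) : Matrix (Fin 2) (Fin 2) ℝ)
      = !![Real.sqrt 2 + 1, 0; 0, Real.sqrt 2 - 1] := by
    rw [Matrix.SpecialLinearGroup.coe_inv, hA, Matrix.adjugate_fin_two]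
    norm_num
  have hAn : ∀ n : ℕ, ((A ^ n : Matrix.SpecialLinearGroup (Fin 2) ℝ) : Matrix (Fin 2) (Fin 2) ℝ)
      = !![(Real.sqrt 2 - 1)^n, 0; 0, (Real.sqrt 2 + 1)^n] := fun n => by
    rw [Matrix.SpecialLinearGroup.coe_pow, hA, diag_pow]
  have hAin : ∀ n : ℕ, ((A⁻¹ ^ n : Matrix.SpecialLinearGroup (Fin 2) ℝ) : Matrix (Fin 2) (Fin 2) ℝ)
      = !![(Real.sqrt 2 + 1)^n, 0; 0, (Real.sqrt 2 - 1)^n] := fun n => by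
    rw [Matrix.SpecialLinearGroup.coe_pow, hAinv, diag_pow]
  have hBn : ∀ k : ℕ, ((B ^ k : Matrix.SpecialLinearGroup (Fin 2) ℝ) : Matrix (Fin 2) (Fin 2) ℝ)
      = !![1, (k:ℝ); 0, 1] := fun k => by
    rw [Matrix.SpecialLinearGroup.coe_pow, hB, unipotent_pow]
  -- the key identity with natural-number exponent
  have key : ∀ n : ℕ, (A⁻¹ ^ n * B * A ^ n) * (A ^ n * B * A⁻¹ ^ n) = B ^ (mseq n).toNat := by
    intro n
    apply Subtype.coe_injective
    simp only [Matrix.SpecialLinearGroup.coe_mul, hAn, hAin, hBn, hB]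
    have hcast : (((mseq n).toNat : ℕ) : ℝ) = lam ^ (2*n) + lam⁻¹ ^ (2*n) := by
      rw [← hmr n]
      exact_mod_cast congrArg (Int.cast : ℤ → ℝ) (Int.toNat_of_nonneg (hpos n).le)
    rw [hcast, hlinv, hlam, pow_mul' (Real.sqrt 2 + 1), pow_mul' (Real.sqrt 2 - 1)]
    set x := (Real.sqrt 2 - 1) ^ n with hx
    set y := (Real.sqrt 2 + 1) ^ n with hy
    have hxy : x * y = 1 := by
      rw [hx, hy, ← mul_pow, show (Real.sqrt 2 - 1) * (Real.sqrt 2 + 1) = 1 by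
        linear_combination h2, one_pow]
    rw [Matrix.mul_fin_two, Matrix.mul_fin_two, Matrix.mul_fin_two, Matrix.mul_fin_two,
      Matrix.mul_fin_two]
    ext i j
    fin_cases i <;> fin_cases j <;> simp <;>
      first
        | linear_combination (x * y + 1) * hxy
        | linear_combination (x ^ 2 + y ^ 2) * hxy
        | ring
  -- word length facts
  set S : Set (Matrix.SpecialLinearGroup (Fin 2) ℝ) := {A, B} with hS
  have hSA : A ∈ S := Set.mem_insert _ _
  have hSB : B ∈ S := Set.mem_insert_of_mem _ rfl
  have hwordlen : ∀ n : ℕ, wordLength S (B ^ (mseq n).toNat) ≤ 4 * n + 2 := by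
    intro n
    have hwA : HasWord S (A ^ n) n := hasWord_pow (Or.inl hSA) n
    have hwAi : HasWord S (A⁻¹ ^ n) n := hasWord_pow (Or.inr (by rw [inv_inv]; exact hSA)) n
    have hwB : HasWord S B 1 := hasWord_gen (Or.inl hSB)
    have hw := ((hwAi.mul hwB).mul hwA).mul ((hwA.mul hwB).mul hwAi)
    rw [key n] at hw
    have := wordLength_le_of_hasWord hw
    omega
  constructor
  · -- part 1
    intro n
    refine ⟨mseq n, hpos n, hmr n, ?_⟩
    rw [key n, ← zpow_natCast, Int.toNat_of_nonneg (hpos n).le]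
  · -- part 2 : distortion
    constructor
    · intro h
      obtain ⟨k, hk, hk1⟩ := isOfFinOrder_iff_pow_eq_one.mp h
      have h01 := congrArg (fun M : Matrix.SpecialLinearGroup (Fin 2) ℝ => (M : Matrix (Fin 2) (Fin 2) ℝ) 0 1) hk1
      simp only [hBn k, Matrix.SpecialLinearGroup.coe_one] at h01
      rw [Matrix.one_apply_ne (by decide : (0 : Fin 2) ≠ 1)] at h01
      simp at h01
      omega
    · -- liminf = 0
      set g : ℕ → ℝ := fun k => (wordLength S (B ^ k) : ℝ) / k with hg
      have hg0 : ∀ k, 0 ≤ g k := fun k => by positivity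
      have hgb : ∀ k, g k ≤ 1 := by
        intro k
        have : wordLength S (B ^ k) ≤ k := wordLength_le_of_hasWord (hasWord_pow (Or.inl hSB) k)
        exact div_le_one_of_le₀ (by exact_mod_cast this) (by positivity)
      set a : ℕ → ℕ := fun n => (mseq n).toNat with ha
      have hage : ∀ n : ℕ, (4:ℝ) ^ n ≤ (a n : ℝ) := by
        intro n
        have h4 : (4:ℝ) ≤ lam ^ 2 := by rw [hlam]; nlinarith
        have h1 : (4:ℝ) ^ n ≤ (lam ^ 2) ^ n :=
          pow_le_pow_left₀ (by norm_num) h4 n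
        have h2' : (a n : ℝ) = lam ^ (2*n) + lam⁻¹ ^ (2*n) := by
          rw [← hmr n]
          exact_mod_cast congrArg (Int.cast : ℤ → ℝ) (Int.toNat_of_nonneg (hpos n).le)
        rw [h2', pow_mul]
        have : (0:ℝ) ≤ lam⁻¹ ^ (2*n) := by positivity
        linarith
      have hatop : Filter.Tendsto a Filter.atTop Filter.atTop := by
        apply Filter.tendsto_atTop_mono _ Filter.tendsto_id
        intro n
        have h1 : (n:ℝ) ≤ (4:ℝ) ^ n := by
          have := Nat.lt_pow_self (n := n) (by norm_num : 1 < 4)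
          have : (n:ℝ) ≤ ((4 ^ n : ℕ) : ℝ) := by exact_mod_cast this.le
          simpa [Nat.cast_pow] using this
        have : (n:ℝ) ≤ (a n : ℝ) := le_trans h1 (hage n)
        exact_mod_cast this
      have hgan : ∀ n : ℕ, g (a n) ≤ (4 * n + 2 : ℝ) / 4 ^ n := by
        intro n
        apply div_le_div₀ (by positivity) _ (by positivity) (hage n)
        have := hwordlen n
        push_cast
        exact_mod_cast this
      have T : Filter.Tendsto (fun n : ℕ => (4 * n + 2 : ℝ) / 4 ^ n)
          Filter.atTop (nhds 0) := by
        have S1 : Summable (fun n : ℕ => (n:ℝ) * (1/4)^n) := by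
          simpa using summable_pow_mul_geometric_of_norm_lt_one 1 (r := (1/4 : ℝ))
            (by rw [Real.norm_eq_abs, abs_of_pos] <;> norm_num)
        have T1 := S1.tendsto_atTop_zero
        have T2 : Filter.Tendsto (fun n : ℕ => ((1:ℝ)/4) ^ n) Filter.atTop (nhds 0) :=
          tendsto_pow_atTop_nhds_zero_of_lt_one (by norm_num) (by norm_num)
        have := (T1.const_mul (4:ℝ)).add (T2.const_mul (2:ℝ))
        simp only [mul_zero, add_zero] at this
        have heq : (fun n : ℕ => (4 * n + 2 : ℝ) / 4 ^ n)
            = fun n : ℕ => 4 * ((n:ℝ) * (1/4)^n) + 2 * (1/4)^n := by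
          funext n
          rw [div_pow, one_pow]
          have h4 : (4:ℝ) ^ n ≠ 0 := by positivity
          field_simp
        rw [heq]
        exact this
      refine le_antisymm ?_ ?_
      · apply le_of_forall_pos_le_add
        intro ε hε
        have hev : ∀ᶠ n in Filter.atTop, g (a n) < ε := by
          filter_upwards [T.eventually_lt_const hε] with n hn
          exact lt_of_le_of_lt (hgan n) hn
        have hfreq : ∃ᶠ k in Filter.atTop, g k ≤ 0 + ε :=
          hatop.frequently (hev.frequently.mono (fun n hn => by linarith))
        exact Filter.liminf_le_of_frequently_le hfreq
          (Filter.isBoundedUnder_of ⟨0, fun k => hg0 k⟩)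
      · refine Filter.le_liminf_of_le ?_ (Filter.Eventually.of_forall hg0)
        exact (Filter.isBoundedUnder_of ⟨1, fun k => hgb k⟩).isCoboundedUnder_ge
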